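/- Let Δ be the countable set of finitely supported 0-1 sequences indexed by the positive integers, with componentwise addition modulo 2, and let H = ℓ²(Δ; ℂ). For each k ≥ 1 define operators on H by (J_k f)(x) = (−1)^{x_1+⋯+x_{k−1}+1} · i · f(x+δ_k) and (J'_k f)(x) = (−1)^{x_k} · i · (J_k f)(x), where δ_k is the sequence with 1 in the k-th place and 0 elsewhere. Then the only closed complex subspaces of ℓ²(Δ; ℂ) invariant under J_k and J'_k for all k ≥ 1 are {0} and ℓ²(Δ; ℂ). -/

import Mathlib

/-!
`GWDelta` is the group `Δ` of finitely supported 0-1 sequences indexed by the positive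
integers, with componentwise addition mod 2; the Lean coordinate `i : ℕ` represents the
paper's coordinate `i + 1` (so the Lean index `k` corresponds to the paper's index `k + 1`).
`FockH = ℓ²(Δ; ℂ)`, and `Finsupp.single k 1` is the element `δ_k`.
-/

open MeasureTheory Complex
open Topology ENNReal Filter

noncomputable section

abbrev GWDelta : Type := ℕ →₀ ZMod 2

abbrev FockH : Type := lp (fun _ : GWDelta => ℂ) 2


lemma zmod2_cases (a : ZMod 2) : a = 0 ∨ a = 1 := by revert a; decide

lemma delta_add_delta (k : ℕ) (x : GWDelta) :
    x + Finsupp.single k (1 : ZMod 2) + Finsupp.single k 1 = x := by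
  rw [add_assoc, ← Finsupp.single_add]
  norm_num
  exact (by decide : (1 : ZMod 2) + 1 = 0) ▸ by simp

/-- the Fermi–Fock representation, given on `ℓ²(Δ; ℂ)` by
`(J_k f)(x) = (-1)^{x_1+⋯+x_{k-1}+1} i f(x + δ_k)` and `(J'_k f)(x) = (-1)^{x_k} i (J_k f)(x)`,
admits no nontrivial closed invariant complex subspace. -/
theorem fermiFock_irreducible_complex
    (J J' : ℕ → FockH → FockH)
    (hJ : ∀ (k : ℕ) (f : FockH) (x : GWDelta),
      (J k f : ∀ _ : GWDelta, ℂ) x =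
        (-1 : ℂ) ^ ((∑ i ∈ Finset.range k, (x i).val) + 1) * Complex.I *
          (f : ∀ _ : GWDelta, ℂ) (x + Finsupp.single k 1))
    (hJ' : ∀ (k : ℕ) (f : FockH) (x : GWDelta),
      (J' k f : ∀ _ : GWDelta, ℂ) x =
        (-1 : ℂ) ^ (x k).val * Complex.I * (J k f : ∀ _ : GWDelta, ℂ) x) :
    ∀ V : Submodule ℂ FockH, IsClosed (V : Set FockH) →
      (∀ k : ℕ, ∀ f ∈ V, J k f ∈ V ∧ J' k f ∈ V) →
      V = ⊥ ∨ V = ⊤ := by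
  
  intro V hVc hVinv
  by_cases hbot : V = ⊥
  · exact Or.inl hbot
  right
  -- the composite `J_k ∘ J'_k` is multiplication by `i (-1)^{x k}`
  have hA : ∀ (k : ℕ) (f : FockH) (x : GWDelta),
      (J k (J' k f) : ∀ _ : GWDelta, ℂ) x
        = Complex.I * (-1 : ℂ) ^ ((x k).val) * (f : ∀ _ : GWDelta, ℂ) x := by
    intro k f x
    rw [hJ, hJ', hJ]
    have hxk : (x + Finsupp.single k (1 : ZMod 2)) k = x k + 1 := by simp
    have hsum : ∑ i ∈ Finset.range k, ((x + Finsupp.single k (1:ZMod 2)) i).val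
        = ∑ i ∈ Finset.range k, (x i).val := by
      refine Finset.sum_congr rfl fun i hi => ?_
      have hik : k ≠ i := ((Finset.mem_range.mp hi).ne).symm
      simp [Finsupp.add_apply, Finsupp.single_apply, hik]
    rw [hxk, hsum, delta_add_delta]
    obtain ⟨t, ht2, ht⟩ : ∃ t : ℂ, t * t = 1 ∧
        (-1 : ℂ) ^ ((∑ i ∈ Finset.range k, (x i).val) + 1) = t :=
      ⟨_, by rw [← pow_add]; exact Even.neg_one_pow ⟨_, rfl⟩, rfl⟩
    rw [ht]
    rcases zmod2_cases (x k) with h | h <;> rw [h] <;>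
      simp only [show ((0:ZMod 2)+1).val = 1 from rfl, show ((1:ZMod 2)+1).val = 0 from rfl,
        show ((0:ZMod 2)).val = 0 from rfl, show ((1:ZMod 2)).val = 1 from rfl,
        pow_one, pow_zero]
    · linear_combination (-Complex.I^3 * ((f : ∀ _ : GWDelta, ℂ) x)) * ht2 +
        (-Complex.I * ((f : ∀ _ : GWDelta, ℂ) x)) * Complex.I_sq
    · linear_combination (Complex.I^3 * ((f : ∀ _ : GWDelta, ℂ) x)) * ht2 +
        (Complex.I * ((f : ∀ _ : GWDelta, ℂ) x)) * Complex.I_sq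
  -- projections onto the coordinate hyperplanes `{x k = b}` preserve `V`
  have hP : ∀ (b : ZMod 2) (k : ℕ) (f : FockH), f ∈ V →
      ∃ g, g ∈ V ∧ ∀ x : GWDelta, (g : ∀ _ : GWDelta, ℂ) x
        = if x k = b then (f : ∀ _ : GWDelta, ℂ) x else 0 := by
    intro b k f hf
    refine ⟨(2:ℂ)⁻¹ • (f + ((-1:ℂ)^(b.val) * (-Complex.I)) • J k (J' k f)), ?_, ?_⟩
    · exact V.smul_mem _ (V.add_mem hf (V.smul_mem _ ((hVinv k _ (hVinv k f hf).2).1)))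
    · intro x
      rw [lp.coeFn_smul, Pi.smul_apply, lp.coeFn_add, Pi.add_apply, lp.coeFn_smul,
        Pi.smul_apply, hA]
      rcases zmod2_cases b with hb | hb <;> rcases zmod2_cases (x k) with hx | hx <;>
        rw [hb, hx] <;>
        simp only [show ((0:ZMod 2)).val = 0 from rfl, show ((1:ZMod 2)).val = 1 from rfl,
          pow_one, pow_zero, smul_eq_mul]
      · rw [if_true]
        linear_combination (-(2:ℂ)⁻¹ * ((f : ∀ _ : GWDelta, ℂ) x)) * Complex.I_sq
      · rw [if_neg (by decide : ¬ (1:ZMod 2) = 0)]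
        linear_combination ((2:ℂ)⁻¹ * ((f : ∀ _ : GWDelta, ℂ) x)) * Complex.I_sq
      · rw [if_neg (by decide : ¬ (0:ZMod 2) = 1)]
        linear_combination ((2:ℂ)⁻¹ * ((f : ∀ _ : GWDelta, ℂ) x)) * Complex.I_sq
      · rw [if_true]
        linear_combination (-(2:ℂ)⁻¹ * ((f : ∀ _ : GWDelta, ℂ) x)) * Complex.I_sq
  -- a nonzero element of V
  obtain ⟨f, hfV, hfne⟩ := (Submodule.ne_bot_iff V).mp hbot
  obtain ⟨x0, hx0⟩ : ∃ x0 : GWDelta, (f : ∀ _ : GWDelta, ℂ) x0 ≠ 0 := by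
    by_contra h
    push_neg at h
    exact hfne (lp.ext (funext h))
  -- iterated projections
  have hQ : ∀ N : ℕ, ∃ g, g ∈ V ∧ ∀ x : GWDelta,
      (g : ∀ _ : GWDelta, ℂ) x
        = if (∀ k < N, x k = x0 k) then (f : ∀ _ : GWDelta, ℂ) x else 0 := by
    intro N
    induction N with
    | zero => exact ⟨f, hfV, fun x => by simp⟩
    | succ N ih =>
      obtain ⟨g, hgV, hgx⟩ := ih
      obtain ⟨g', hg'V, hg'x⟩ := hP (x0 N) N g hgV
      refine ⟨g', hg'V, fun x => ?_⟩
      rw [hg'x x, hgx x]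
      by_cases h1 : x N = x0 N
      · rw [if_pos h1]
        by_cases h2 : ∀ k < N, x k = x0 k
        · rw [if_pos h2, if_pos fun k hk =>
            (Nat.lt_succ_iff_lt_or_eq.mp hk).elim (h2 k) (fun he => he ▸ h1)]
        · rw [if_neg h2, if_neg fun h => h2 fun k hk => h k (hk.trans (Nat.lt_succ_self N))]
      · rw [if_neg h1, if_neg fun h => h1 (h N (Nat.lt_succ_self N))]
  choose Q hQV hQx using hQ
  set s : FockH := lp.single 2 x0 ((f : ∀ _ : GWDelta, ℂ) x0) with hs
  have htoReal : (2 : ℝ≥0∞).toReal = 2 := by simp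
  -- pointwise bound
  have hbound : ∀ (N : ℕ) (x : GWDelta),
      ‖(Q N - s : FockH) x‖ ≤ ‖(f : ∀ _ : GWDelta, ℂ) x‖ := by
    intro N x
    rw [lp.coeFn_sub, Pi.sub_apply, hQx N x]
    by_cases hx : x = x0
    · subst hx
      rw [hs, lp.single_apply_self, if_pos fun k _ => rfl, sub_self, norm_zero]
      exact norm_nonneg _
    · rw [hs, lp.single_apply_ne _ _ _ hx, sub_zero]
      by_cases h : ∀ k < N, x k = x0 k
      · rw [if_pos h]
      · rw [if_neg h, norm_zero]; exact norm_nonneg _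
  -- eventual vanishing of each coordinate
  have hev : ∀ x : GWDelta, ∀ᶠ N in Filter.atTop, (Q N - s : FockH) x = 0 := by
    intro x
    by_cases hx : x = x0
    · subst hx
      exact Filter.Eventually.of_forall fun N => by
        rw [lp.coeFn_sub, Pi.sub_apply, hQx N, hs, lp.single_apply_self,
          if_pos fun k _ => rfl, sub_self]
    · obtain ⟨k, hk⟩ : ∃ k, x k ≠ x0 k := by
        by_contra h
        push_neg at h
        exact hx (Finsupp.ext h)
      filter_upwards [Filter.eventually_ge_atTop (k + 1)] with N hN
      rw [lp.coeFn_sub, Pi.sub_apply, hQx N, hs, lp.single_apply_ne _ _ _ hx,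
        if_neg fun h => hk (h k hN), sub_zero]
  -- tendsto of the squared norms
  have hsummable : Summable fun x : GWDelta => ‖(f : ∀ _ : GWDelta, ℂ) x‖ ^ (2:ℝ) := by
    have := (lp.memℓp f).summable (p := 2) (by rw [htoReal]; norm_num)
    rwa [htoReal] at this
  have htsum : Filter.Tendsto (fun N => ∑' x : GWDelta, ‖(Q N - s : FockH) x‖ ^ (2:ℝ))
      Filter.atTop (𝓝 0) := by
    have h0 : (0:ℝ) = ∑' _x : GWDelta, (0:ℝ) := by rw [tsum_zero]
    rw [h0]
    refine tendsto_tsum_of_dominated_convergence hsummable (fun x => ?_) ?_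
    · refine Filter.Tendsto.congr' ?_ tendsto_const_nhds
      filter_upwards [hev x] with N hN
      rw [hN, norm_zero, Real.zero_rpow (by norm_num)]
    · refine Filter.Eventually.of_forall fun N x => ?_
      rw [Real.norm_eq_abs, _root_.abs_of_nonneg (Real.rpow_nonneg (norm_nonneg _) _)]
      exact Real.rpow_le_rpow (norm_nonneg _) (hbound N x) (by norm_num)
  have hnorm : Filter.Tendsto (fun N => ‖Q N - s‖) Filter.atTop (𝓝 0) := by
    have h1 : ∀ N, ‖Q N - s‖ ^ (2:ℝ) = ∑' x : GWDelta, ‖(Q N - s : FockH) x‖ ^ (2:ℝ) := by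
      intro N
      have := lp.norm_rpow_eq_tsum (p := 2) (by rw [htoReal]; norm_num) (Q N - s)
      rwa [htoReal] at this
    have h2 : Filter.Tendsto (fun N => ‖Q N - s‖ ^ (2:ℝ)) Filter.atTop (𝓝 0) :=
      htsum.congr fun N => (h1 N).symm
    have h3 := (Real.continuous_sqrt.tendsto 0).comp h2
    rw [Real.sqrt_zero] at h3
    refine h3.congr fun N => ?_
    rw [Function.comp_apply, show ((2:ℝ)) = ((2:ℕ):ℝ) by norm_num, Real.rpow_natCast,
      Real.sqrt_sq (norm_nonneg _)]
  have key : Filter.Tendsto Q Filter.atTop (𝓝 s) :=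
    tendsto_iff_norm_sub_tendsto_zero.mpr hnorm
  have hsV : s ∈ V := hVc.mem_of_tendsto key (Filter.Eventually.of_forall hQV)
  have hx0V : lp.single 2 x0 (1:ℂ) ∈ V := by
    have h := V.smul_mem (((f : ∀ _ : GWDelta, ℂ) x0)⁻¹) hsV
    rw [hs, ← lp.single_smul, smul_eq_mul, inv_mul_cancel₀ hx0] at h
    exact h
  -- moving between basis vectors
  have hstep : ∀ (k : ℕ) (y : GWDelta), lp.single 2 y (1:ℂ) ∈ V →
      lp.single 2 (y + Finsupp.single k 1) (1:ℂ) ∈ V := by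
    intro k y hy
    set c : ℂ := (-1 : ℂ) ^
        ((∑ i ∈ Finset.range k, ((y + Finsupp.single k (1:ZMod 2)) i).val) + 1) * Complex.I
      with hc
    have hcne : c ≠ 0 := mul_ne_zero (pow_ne_zero _ (by norm_num)) Complex.I_ne_zero
    have heq : J k (lp.single 2 y (1:ℂ)) = c • lp.single 2 (y + Finsupp.single k 1) (1:ℂ) := by
      apply lp.ext
      funext x
      rw [hJ, lp.coeFn_smul, Pi.smul_apply]
      by_cases hx : x = y + Finsupp.single k 1
      · subst hx
        rw [delta_add_delta, lp.single_apply_self, lp.single_apply_self, hc]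
        simp [smul_eq_mul]
      · have h1 : x + Finsupp.single k (1:ZMod 2) ≠ y := by
          intro h
          apply hx
          rw [← delta_add_delta k x, h]
        rw [lp.single_apply_ne _ _ _ h1, lp.single_apply_ne _ _ _ hx]
        simp
    have h2 := (hVinv k _ hy).1
    rw [heq] at h2
    have h3 := V.smul_mem c⁻¹ h2
    rwa [smul_smul, inv_mul_cancel₀ hcne, one_smul] at h3
  have hiff : ∀ y : GWDelta, (lp.single 2 (0:GWDelta) (1:ℂ) ∈ V ↔ lp.single 2 y (1:ℂ) ∈ V) := by
    intro y
    induction y using Finsupp.induction with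
    | zero => exact Iff.rfl
    | single_add a b g hag hb ih =>
      have hb1 : b = 1 := (zmod2_cases b).resolve_left hb
      subst hb1
      rw [add_comm (Finsupp.single a (1:ZMod 2)) g]
      constructor
      · intro h0
        exact hstep a g (ih.mp h0)
      · intro h
        apply ih.mpr
        have := hstep a _ h
        rwa [delta_add_delta] at this
  have hall : ∀ y : GWDelta, lp.single 2 y (1:ℂ) ∈ V :=
    fun y => (hiff y).mp ((hiff x0).mpr hx0V)
  -- conclude
  rw [Submodule.eq_top_iff']
  intro g
  have hsum := lp.hasSum_single (E := fun _ : GWDelta => ℂ) (p := 2) (by simp) g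
  refine hVc.mem_of_tendsto hsum (Filter.Eventually.of_forall fun sset => ?_)
  refine Submodule.sum_mem V fun x _ => ?_
  have hsx : lp.single 2 x ((g : ∀ _ : GWDelta, ℂ) x)
      = ((g : ∀ _ : GWDelta, ℂ) x) • (lp.single 2 x (1:ℂ) : FockH) := by
    rw [← lp.single_smul, smul_eq_mul, mul_one]
  rw [hsx]
  exact V.smul_mem _ (hall x)
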